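/- Suppose Z ⊊ Y ⊊ X and |Z| ≥ 2, and let α, β ∈ T(X,Y,Z). If α and β are R*-related in T(X,Y,Z), then the kernel partitions of α and β coincide, i.e., for all x₁, x₂ ∈ X: α(x₁) = α(x₂) if and only if β(x₁) = β(x₂). (In fact this holds for any nonempty Z ⊊ Y ⊊ X.) -/
import Mathlib


/-- If Z ⊊ Y ⊊ X, |Z| ≥ 2, and α, β ∈ T(X,Y,Z) are R*-related in T(X,Y,Z),
then α and β have the same kernel partition. -/
theorem stmt_9 {X : Type*} (Y Z : Set X) (hZY : Z ⊂ Y) (hYX : Y ⊂ Set.univ)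
    (hZ2 : ∃ z₁ ∈ Z, ∃ z₂ ∈ Z, z₁ ≠ z₂)
    (α β : X → X) (hα : α '' Y ⊆ Z) (hβ : β '' Y ⊆ Z)
    (hRs : ∀ η θ : X → X, (η = id ∨ η '' Y ⊆ Z) → (θ = id ∨ θ '' Y ⊆ Z) →
      ((α ∘ η = α ∘ θ) ↔ (β ∘ η = β ∘ θ))) :
    ∀ x₁ x₂ : X, α x₁ = α x₂ ↔ β x₁ = β x₂ := by
  classical
  obtain ⟨z, hz, -⟩ := hZ2
  obtain ⟨p, -, hp⟩ : ∃ p, p ∈ Set.univ ∧ p ∉ Y := Set.exists_of_ssubset hYX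
  intro x₁ x₂
  set η : X → X := fun w => if w ∈ Y then z else x₁ with hηdef
  set θ : X → X := fun w => if w ∈ Y then z else x₂ with hθdef
  have himg : ∀ (c : X), (fun w => if w ∈ Y then z else c) '' Y ⊆ Z := by
    rintro c _ ⟨w, hw, rfl⟩
    simp [hw, hz]
  have key : (α ∘ η = α ∘ θ) ↔ (β ∘ η = β ∘ θ) :=
    hRs η θ (Or.inr (himg x₁)) (Or.inr (himg x₂))
  have comp_iff : ∀ γ : X → X, (γ ∘ η = γ ∘ θ) ↔ γ x₁ = γ x₂ := by
    intro γ
    constructor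
    · intro h
      have := congrFun h p
      simpa [hηdef, hθdef, Function.comp, hp] using this
    · intro h
      funext w
      by_cases hw : w ∈ Y <;> simp [hηdef, hθdef, Function.comp, hw, h]
  rw [← comp_iff α, ← comp_iff β]
  exact key
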